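/- Let c₂ > 0 and set b = √(c₂/(3c₄)) for c₄ > 0 — equivalently consider the ODE (φ')² = c₄(φ² + a²)(φ² + b²) with a² = 2c₂/(3c₄), b² = c₂/(3c₄). If φ(ξ) = b·tn(ε√(2c₂/3)·(ξ − ξ₀), 1/√2) (Jacobi tangent function tn = sn/cn with modulus 1/√2), then (φ')² = c₀ + c₂φ² + c₄φ⁴ with c₀ = 2c₂²/(9c₄), wherever cn ≠ 0. -/

import Mathlib

/-- Case II.f: with `c₂, c₄ > 0` and `c₀ = 2c₂²/(9c₄)`, the function
`φ(ξ) = b · tn(ε√(2c₂/3)(ξ − ξ₀), 1/√2)` (Jacobi tangent `tn = sn/cn` with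
modulus `m = 1/√2`, characterized by its defining ODEs and identities)
satisfies `(φ')² = c₀ + c₂φ² + c₄φ⁴` wherever `cn ≠ 0`. -/
theorem rosenau_caseIIf_tn_solution
    (c₂ c₄ ξ₀ ε : ℝ) (h₂ : 0 < c₂) (h₄ : 0 < c₄) (hε : ε = 1 ∨ ε = -1)
    (sn cn dn : ℝ → ℝ)
    (hsn : Differentiable ℝ sn) (hcn : Differentiable ℝ cn)
    (hdn : Differentiable ℝ dn)
    (hsn' : ∀ x, deriv sn x = cn x * dn x)
    (hcn' : ∀ x, deriv cn x = -(sn x * dn x))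
    (hdn' : ∀ x, deriv dn x = -((1 / 2) * sn x * cn x))
    (hid1 : ∀ x, (sn x) ^ 2 + (cn x) ^ 2 = 1)
    (hid2 : ∀ x, (dn x) ^ 2 + (1 / 2) * (sn x) ^ 2 = 1) :
    letI b : ℝ := Real.sqrt (c₂ / (3 * c₄))
    letI φ : ℝ → ℝ := fun ξ =>
      b * (sn (ε * Real.sqrt (2 * c₂ / 3) * (ξ - ξ₀))
           / cn (ε * Real.sqrt (2 * c₂ / 3) * (ξ - ξ₀)))
    ∀ ξ : ℝ, cn (ε * Real.sqrt (2 * c₂ / 3) * (ξ - ξ₀)) ≠ 0 →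
      (deriv φ ξ) ^ 2
        = 2 * c₂ ^ 2 / (9 * c₄) + c₂ * (φ ξ) ^ 2 + c₄ * (φ ξ) ^ 4 := by
  intro ξ hc
  set b : ℝ := Real.sqrt (c₂ / (3 * c₄)) with hB
  set k : ℝ := ε * Real.sqrt (2 * c₂ / 3) with hk
  set u : ℝ := k * (ξ - ξ₀) with hu
  have hg : HasDerivAt (fun ξ : ℝ => k * (ξ - ξ₀)) k ξ := by
    simpa using ((hasDerivAt_id ξ).sub_const ξ₀).const_mul k
  have hsnu : HasDerivAt sn (cn u * dn u) u := by
    rw [← hsn' u]; exact (hsn u).hasDerivAt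
  have hcnu : HasDerivAt cn (-(sn u * dn u)) u := by
    rw [← hcn' u]; exact (hcn u).hasDerivAt
  set φ : ℝ → ℝ := fun ξ =>
      b * (sn (ε * Real.sqrt (2 * c₂ / 3) * (ξ - ξ₀))
           / cn (ε * Real.sqrt (2 * c₂ / 3) * (ξ - ξ₀))) with hφdef
  have hφ : HasDerivAt φ
      (b * ((cn u * dn u * k * cn u - sn u * (-(sn u * dn u) * k)) / cn u ^ 2)) ξ :=
    (((hsnu.comp ξ hg).div (hcnu.comp ξ hg) hc)).const_mul b
  have hd : deriv φ ξ = b * (k * dn u / cn u ^ 2) := by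
    rw [hφ.deriv]
    have h1 := hid1 u
    have hnum : cn u * dn u * k * cn u - sn u * (-(sn u * dn u) * k) = k * dn u := by
      linear_combination (k * dn u) * h1
    rw [hnum]
  have hb2 : b ^ 2 = c₂ / (3 * c₄) := Real.sq_sqrt (by positivity)
  have hk2 : k ^ 2 = 2 * c₂ / 3 := by
    have : (Real.sqrt (2 * c₂ / 3)) ^ 2 = 2 * c₂ / 3 := Real.sq_sqrt (by positivity)
    rcases hε with h | h <;> rw [hk, h] <;> nlinarith [this]
  have hdn2 : dn u ^ 2 = 1 - (1/2) * sn u ^ 2 := by linarith [hid2 u]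
  have hsn2 : sn u ^ 2 = 1 - cn u ^ 2 := by linarith [hid1 u]
  have hφξ : φ ξ = b * (sn u / cn u) := rfl
  rw [hd, hφξ]
  have h4 : (c₄ : ℝ) ≠ 0 := ne_of_gt h₄
  have hY : ε ^ 2 * Real.sqrt (2 * c₂ / 3) ^ 2 = 2 * c₂ / 3 := by
    have hsq : (Real.sqrt (2 * c₂ / 3)) ^ 2 = 2 * c₂ / 3 := Real.sq_sqrt (by positivity)
    rcases hε with h | h <;> rw [h] <;> nlinarith [hsq]
  have hb2c : 3 * c₄ * b ^ 2 = c₂ := by rw [hb2]; field_simp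
  field_simp
  linear_combination
    (9 * c₄ * b ^ 2 * dn u ^ 2) * hk2 + (6 * c₄ * b ^ 2 * c₂) * hdn2 +
    (2 * c₂ * (1 - sn u ^ 2 / 2) - 3 * c₂ * cn u ^ 2 * sn u ^ 2
      - sn u ^ 4 * (3 * c₄ * b ^ 2 + c₂)) * hb2c +
    (-(c₂ ^ 2 * (sn u ^ 2 + 2 * cn u ^ 2 + 2))) * hsn2
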